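/- If θ ~ Beta(α, β) and, conditionally on θ, R_1, R_2, … are i.i.d. Bernoulli(θ), then the posterior mean μ_n = (α + Σ_{s=1}^n R_s)/(α + β + n) is a c-sub-Gaussian random variable with c = n / (4(α+β)(α+β+n)); that is, E[exp(λ(μ_n − E[μ_n]))] ≤ exp(λ²·n / (8(α+β)(α+β+n))) for all λ ∈ ℝ. -/

import Mathlib

open MeasureTheory Real Set

/-- The Beta(α, β) probability measure on `ℝ`, defined by its density
`x^(α−1)(1−x)^(β−1) / B(α,β)` on `(0,1)`. -/
noncomputable def betaMeasure (a b : ℝ) : Measure ℝ :=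
  volume.withDensity fun x =>
    ENNReal.ofReal
      (Set.indicator (Set.Ioo (0:ℝ) 1)
        (fun y => y ^ (a - 1) * (1 - y) ^ (b - 1)
          / (∫ z in Set.Ioo (0:ℝ) 1, z ^ (a - 1) * (1 - z) ^ (b - 1))) x)

/-- The Bernoulli(θ) measure on `ℝ` (mass θ at 1 and 1−θ at 0). -/
noncomputable def bernoulliMeasure (θ : ℝ) : Measure ℝ :=
  (ENNReal.ofReal θ) • Measure.dirac 1 + (ENNReal.ofReal (1 - θ)) • Measure.dirac 0

/-- The joint law of `n` observations in the Beta-Bernoulli model: draw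
`θ ~ Beta(α,β)` and, conditionally on `θ`, observe `n` i.i.d. Bernoulli(θ) rewards. -/
noncomputable def betaBernoulli (a b : ℝ) (n : ℕ) : Measure (Fin n → ℝ) :=
  (betaMeasure a b).bind fun θ => Measure.pi fun _ : Fin n => bernoulliMeasure θ

/-- In the Beta-Bernoulli model, the posterior mean
`μ_n = (α + Σ_{s=1}^n R_s)/(α + β + n)` is `n/(4(α+β)(α+β+n))`-sub-Gaussian around its
mean `α/(α+β)`:
`E[exp(λ(μ_n − E[μ_n]))] ≤ exp(λ²·n/(8(α+β)(α+β+n)))` for all `λ ∈ ℝ`. -/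

noncomputable def Bi (a b : ℝ) : ℝ := ∫ x in Ioo (0:ℝ) 1, x ^ (a-1) * (1-x) ^ (b-1)

lemma F_eq {a b : ℝ} {x : ℝ} (hx : x ∈ Ioo (0:ℝ) 1) :
    (x:ℂ) ^ ((a:ℂ) - 1) * (1 - (x:ℂ)) ^ ((b:ℂ) - 1)
      = ((x ^ (a-1) * (1-x) ^ (b-1) : ℝ) : ℂ) := by
  obtain ⟨h0, h1⟩ := hx
  rw [Complex.ofReal_mul, Complex.ofReal_cpow h0.le, Complex.ofReal_cpow (by linarith)]
  push_cast
  ring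

lemma intOnC (a b : ℝ) (ha : 0 < a) (hb : 0 < b) :
    IntegrableOn (fun x : ℝ => (x:ℂ) ^ ((a:ℂ) - 1) * (1 - (x:ℂ)) ^ ((b:ℂ) - 1))
      (Ioo (0:ℝ) 1) volume := by
  have h := Complex.betaIntegral_convergent (u := a) (v := b) (by simpa) (by simpa)
  rw [intervalIntegrable_iff_integrableOn_Ioc_of_le (by norm_num)] at h
  exact h.mono_set Ioo_subset_Ioc_self

lemma intOn (a b : ℝ) (ha : 0 < a) (hb : 0 < b) :
    IntegrableOn (fun x => x ^ (a-1) * (1-x) ^ (b-1)) (Ioo (0:ℝ) 1) volume := by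
  have h2 := (intOnC a b ha hb).re
  refine (IntegrableOn.congr_fun h2 (fun x hx => ?_) measurableSet_Ioo)
  rw [F_eq hx]
  simp

lemma Bi_eq_re (a b : ℝ) (ha : 0 < a) (hb : 0 < b) :
    Bi a b = (Complex.betaIntegral a b).re := by
  rw [Complex.betaIntegral, intervalIntegral.integral_of_le (by norm_num : (0:ℝ) ≤ 1),
    integral_Ioc_eq_integral_Ioo]
  have h := integral_re (intOnC a b ha hb)
  simp only [RCLike.re_to_complex] at h
  rw [← h, Bi]
  refine setIntegral_congr_fun measurableSet_Ioo (fun x hx => ?_)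
  rw [F_eq hx]
  simp

lemma Bi_rec (a b : ℝ) (ha : 0 < a) (hb : 0 < b) :
    a * Bi a (b+1) = b * Bi (a+1) b := by
  have h := Complex.betaIntegral_recurrence (u := a) (v := b) (by simpa) (by simpa)
  have := congrArg Complex.re h
  simp only [Complex.mul_re, Complex.ofReal_re, Complex.ofReal_im, zero_mul, sub_zero] at this
  rw [Bi_eq_re a (b+1) ha (by linarith), Bi_eq_re (a+1) b (by linarith) hb]
  push_cast at this ⊢
  convert this using 3 <;> push_cast <;> ring

lemma Bi_add (a b : ℝ) (ha : 0 < a) (hb : 0 < b) :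
    Bi a b = Bi (a+1) b + Bi a (b+1) := by
  rw [Bi, Bi, Bi, ← integral_add (by simpa [IntegrableOn] using intOn (a+1) b (by linarith) hb)
    (by simpa [IntegrableOn] using intOn a (b+1) ha (by linarith))]
  refine setIntegral_congr_fun measurableSet_Ioo (fun x hx => ?_)
  obtain ⟨h0, h1⟩ := hx
  have e1 : x ^ (a+1-1) = x ^ (a-1) * x := by
    rw [show a+1-1 = (a-1)+1 by ring, Real.rpow_add_one h0.ne']
  have e2 : (1-x) ^ (b+1-1) = (1-x) ^ (b-1) * (1-x) := by
    rw [show b+1-1 = (b-1)+1 by ring, Real.rpow_add_one (by intro hc; nlinarith [hc] : (1:ℝ)-x ≠ 0)]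
  rw [e1, e2]; ring

lemma Bi_pos (a b : ℝ) (ha : 0 < a) (hb : 0 < b) : 0 < Bi a b := by
  rw [Bi]
  rw [setIntegral_pos_iff_support_of_nonneg_ae ?_ (intOn a b ha hb)]
  · have hsub : Ioo (0:ℝ) 1 ⊆ (Function.support fun x => x ^ (a-1) * (1-x) ^ (b-1)) ∩ Ioo 0 1 := by
      intro x hx
      obtain ⟨h0, h1⟩ := hx
      have hx1 : (0:ℝ) < 1 - x := by linarith
      refine ⟨?_, ⟨h0, h1⟩⟩
      have : 0 < x ^ (a-1) * (1-x) ^ (b-1) := by positivity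
      exact this.ne'
    calc (0:ENNReal) < volume (Ioo (0:ℝ) 1) := by simp [Real.volume_Ioo]
      _ ≤ _ := measure_mono hsub
  · refine (ae_restrict_iff' measurableSet_Ioo).2 (Filter.Eventually.of_forall fun x hx => ?_)
    obtain ⟨h0, h1⟩ := hx
    have hx1 : (0:ℝ) < 1 - x := by linarith
    positivity

lemma Bi_left (a b : ℝ) (ha : 0 < a) (hb : 0 < b) :
    Bi (a+1) b = a / (a+b) * Bi a b := by
  have h1 := Bi_rec a b ha hb
  have h2 := Bi_add a b ha hb
  have hab : a + b ≠ 0 := by positivity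
  field_simp
  nlinarith [h1, h2]

lemma Bi_right (a b : ℝ) (ha : 0 < a) (hb : 0 < b) :
    Bi a (b+1) = b / (a+b) * Bi a b := by
  have h1 := Bi_rec a b ha hb
  have h2 := Bi_add a b ha hb
  have hab : a + b ≠ 0 := by positivity
  field_simp
  nlinarith [h1, h2]


lemma bern_mgf (p : ℝ) (hp0 : 0 ≤ p) (hp1 : p ≤ 1) (t : ℝ) :
    1 - p + p * exp t ≤ exp (p * t + t^2 / 8) := by
  set d : ℝ → ℝ := fun s => 1 - p + p * exp s with hdset
  have hd : ∀ s, 0 < d s := by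
    intro s
    rcases lt_or_eq_of_le hp1 with h | h
    · have : 0 ≤ p * exp s := by positivity
      simp only [hdset]; nlinarith
    · subst h
      simp [hdset, exp_pos]
  have hd' : ∀ s, HasDerivAt d (p * exp s) s := by
    intro s
    rw [hdset]
    exact ((Real.hasDerivAt_exp s).const_mul p).const_add (1-p)
  have hgoal : 1 - p + p * exp t = d t := by rw [hdset]
  clear_value d
  set ψ : ℝ → ℝ := fun s => p + s/4 - p * exp s / d s with hψset
  set φ : ℝ → ℝ := fun s => p * s + s^2/8 - Real.log (d s) with hφset
  have hφ' : ∀ s, HasDerivAt φ (ψ s) s := by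
    intro s
    have h1 : HasDerivAt (fun s : ℝ => p * s + s^2/8) (p + s/4) s := by
      have := ((hasDerivAt_id s).const_mul p).add ((hasDerivAt_pow 2 s).div_const 8)
      refine this.congr_deriv ?_; norm_num; ring
    have h2 : HasDerivAt (fun s => Real.log (d s)) (p * exp s / d s) s :=
      (hd' s).log (hd s).ne'
    rw [hφset, hψset]
    exact h1.sub h2
  clear_value φ
  have hψ' : ∀ s, HasDerivAt ψ (1/4 - p * (1-p) * exp s / (d s)^2) s := by
    intro s
    have h1 : HasDerivAt (fun s : ℝ => p + s/4) (1/4) s := by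
      simpa using ((hasDerivAt_id s).div_const 4).const_add p
    have h2 : HasDerivAt (fun s => p * exp s / d s)
        ((p * exp s * d s - p * exp s * (p * exp s)) / (d s)^2) s :=
      ((Real.hasDerivAt_exp s).const_mul p).div (hd' s) (hd s).ne'
    rw [hψset]
    have := h1.sub h2
    refine this.congr_deriv ?_
    have hds : 1 - p + p * exp s ≠ 0 := by
      have := (hd s).ne'; rw [hdset] at this; exact this
    simp only [hdset]
    field_simp
    ring
  clear_value ψ
  have hψmono : Monotone ψ := by
    refine monotone_of_deriv_nonneg (fun s => (hψ' s).differentiableAt) (fun s => ?_)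
    rw [(hψ' s).deriv]
    have h1 : 4 * (p * (1-p) * exp s) ≤ (d s)^2 := by
      have := sq_nonneg (1 - p - p * exp s)
      have he := exp_pos s
      simp only [hdset]
      nlinarith
    have h2 : (0:ℝ) < (d s)^2 := pow_pos (hd s) 2
    have h3 : p * (1-p) * exp s ≤ 1/4 * (d s)^2 := by linarith
    rw [sub_nonneg, div_le_iff₀ h2]
    exact h3
  have hψ0 : ψ 0 = 0 := by simp [hψset, hdset]
  have hφ0 : φ 0 = 0 := by simp [hφset, hdset]
  have hkey : 0 ≤ φ t := by
    rcases le_total 0 t with ht | ht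
    · have hm : MonotoneOn φ (Ici (0:ℝ)) := by
        refine monotoneOn_of_deriv_nonneg (convex_Ici 0)
          (fun s _ => ((hφ' s).differentiableAt).continuousAt.continuousWithinAt) ?_ ?_
        · exact fun s _ => ((hφ' s).differentiableAt).differentiableWithinAt
        · intro s hs
          rw [(hφ' s).deriv]
          rw [interior_Ici] at hs
          calc (0:ℝ) = ψ 0 := hψ0.symm
            _ ≤ ψ s := hψmono (le_of_lt hs)
      calc (0:ℝ) = φ 0 := hφ0.symm
        _ ≤ φ t := hm (by simp) (by simpa using ht) ht
    · have hm : AntitoneOn φ (Iic (0:ℝ)) := by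
        refine antitoneOn_of_deriv_nonpos (convex_Iic 0)
          (fun s _ => ((hφ' s).differentiableAt).continuousAt.continuousWithinAt) ?_ ?_
        · exact fun s _ => ((hφ' s).differentiableAt).differentiableWithinAt
        · intro s hs
          rw [(hφ' s).deriv]
          rw [interior_Iic] at hs
          calc ψ s ≤ ψ 0 := hψmono (le_of_lt hs)
            _ = 0 := hψ0
      calc (0:ℝ) = φ 0 := hφ0.symm
        _ ≤ φ t := hm (by simpa using ht) (by simp) ht
  have : Real.log (d t) ≤ p * t + t^2/8 := by
    simp only [hφset] at hkey; linarith
  rw [hgoal]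
  calc d t = exp (Real.log (d t)) := (exp_log (hd t)).symm
    _ ≤ exp (p * t + t^2/8) := exp_le_exp.2 this


instance bern_finite (θ : ℝ) : IsFiniteMeasure (bernoulliMeasure θ) := by
  constructor
  simp [bernoulliMeasure]

lemma measurable_bern : Measurable bernoulliMeasure := by
  apply Measure.measurable_of_measurable_coe
  intro s hs
  simp only [bernoulliMeasure, Measure.add_apply, Measure.smul_apply, smul_eq_mul]
  refine Measurable.add ?_ ?_
  · exact ENNReal.measurable_ofReal.mul_const _
  · exact (ENNReal.measurable_ofReal.comp (measurable_const.sub measurable_id)).mul_const _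

lemma measurable_piBern (n : ℕ) :
    Measurable fun θ : ℝ => Measure.pi (fun _ : Fin n => bernoulliMeasure θ) := by
  apply Measure.measurable_of_measurable_coe
  refine MeasurableSpace.induction_on_inter generateFrom_pi.symm isPiSystem_pi ?_ ?_ ?_ ?_
  · simp
  · rintro t ⟨S, hS, rfl⟩
    simp_rw [Measure.pi_pi]
    exact Finset.measurable_prod _ fun i _ =>
      (Measure.measurable_coe (show MeasurableSet (S i) from hS i (mem_univ i))).comp
        measurable_bern
  · intro t ht hrec
    have : ∀ θ : ℝ, Measure.pi (fun _ : Fin n => bernoulliMeasure θ) tᶜ =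
        Measure.pi (fun _ : Fin n => bernoulliMeasure θ) univ
          - Measure.pi (fun _ : Fin n => bernoulliMeasure θ) t := by
      intro θ
      rw [measure_compl ht (measure_ne_top _ t)]
    simp_rw [this, Measure.pi_univ]
    refine Measurable.sub ?_ hrec
    exact Finset.measurable_prod _ fun i _ =>
      (Measure.measurable_coe MeasurableSet.univ).comp measurable_bern
  · intro f hdisj hmeas hrec
    simp_rw [measure_iUnion hdisj hmeas]
    exact Measurable.ennreal_tsum hrec

lemma lintegral_pi_pow {n : ℕ} (μ : Measure ℝ) [SigmaFinite μ] {g : ℝ → ENNReal}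
    (hg : Measurable g) :
    ∫⁻ x : Fin n → ℝ, ∏ i, g (x i) ∂(Measure.pi fun _ => μ) = (∫⁻ x, g x ∂μ) ^ n := by
  induction n with
  | zero => simp
  | succ n ih =>
    have h := (measurePreserving_piFinSuccAbove (fun _ : Fin (n+1) => μ) 0).symm
    have hmeas : Measurable fun x : Fin (n+1) → ℝ => ∏ i, g (x i) :=
      Finset.measurable_prod _ fun i _ => hg.comp (measurable_pi_apply i)
    rw [← h.lintegral_comp hmeas]
    simp_rw [MeasurableEquiv.piFinSuccAbove_symm_apply, Fin.insertNthEquiv,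
      Fin.prod_univ_succ, Fin.insertNth_zero]
    simp only [Fin.zero_succAbove, cast_eq, Function.comp_def, Fin.cons_zero, Fin.cons_succ,
      Equiv.coe_fn_mk]
    rw [lintegral_prod_mul (f := g) (g := fun y : Fin n → ℝ => ∏ i, g (y i)) (hg.aemeasurable)
      ((Finset.measurable_prod _ fun i _ => hg.comp (measurable_pi_apply i)).aemeasurable)]
    rw [ih]
    ring

lemma lint_bern (θ t : ℝ) :
    ∫⁻ x, ENNReal.ofReal (exp (t * x)) ∂(bernoulliMeasure θ)
      = ENNReal.ofReal θ * ENNReal.ofReal (exp t) + ENNReal.ofReal (1 - θ) := by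
  simp [bernoulliMeasure, lintegral_add_measure, lintegral_smul_measure, lintegral_dirac]

lemma intOnP (t : ℝ) (n : ℕ) (a b : ℝ) (ha : 0 < a) (hb : 0 < b) :
    IntegrableOn (fun x => (1 - x + x * exp t)^n * (x ^ (a-1) * (1-x) ^ (b-1)))
      (Ioo (0:ℝ) 1) volume := by
  refine Integrable.bdd_mul (c := (1 + exp t)^n) (intOn a b ha hb) ?_ ?_
  · exact ((continuous_const.sub continuous_id).add
      (continuous_id.mul continuous_const)).pow n |>.aestronglyMeasurable
  · refine (ae_restrict_iff' measurableSet_Ioo).2 (Filter.Eventually.of_forall fun x hx => ?_)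
    obtain ⟨h0, h1⟩ := hx
    have he := exp_pos t
    have h2 : 0 ≤ 1 - x + x * exp t := by nlinarith
    have h3 : 1 - x + x * exp t ≤ 1 + exp t := by nlinarith
    rw [norm_pow, Real.norm_eq_abs, abs_of_nonneg h2]
    exact pow_le_pow_left₀ h2 h3 n

lemma core (t : ℝ) (n : ℕ) : ∀ a b : ℝ, 0 < a → 0 < b →
    ∫ x in Ioo (0:ℝ) 1, (1 - x + x * exp t)^n * (x ^ (a-1) * (1-x) ^ (b-1))
      ≤ exp (t * n * a / (a+b) + t^2 * n * (a+b+n) / (8*(a+b))) * Bi a b := by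
  induction n with
  | zero => intro a b ha hb; simp [Bi]
  | succ n ih =>
    intro a b ha hb
    have hab : 0 < a + b := by linarith
    have hab1 : 0 < a + b + 1 := by linarith
    have hsplit : ∫ x in Ioo (0:ℝ) 1, (1 - x + x * exp t)^(n+1) * (x ^ (a-1) * (1-x) ^ (b-1))
        = (∫ x in Ioo (0:ℝ) 1, (1 - x + x * exp t)^n * (x ^ (a-1) * (1-x) ^ (b+1-1)))
          + exp t * ∫ x in Ioo (0:ℝ) 1, (1 - x + x * exp t)^n * (x ^ (a+1-1) * (1-x) ^ (b-1)) := by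
      rw [← integral_const_mul, ← integral_add (intOnP t n a (b+1) ha (by linarith))
        ((intOnP t n (a+1) b (by linarith) hb).const_mul (exp t))]
      refine setIntegral_congr_fun measurableSet_Ioo (fun x hx => ?_)
      obtain ⟨h0, h1⟩ := hx
      have e1 : x ^ (a+1-1) = x ^ (a-1) * x := by
        rw [show a+1-1 = (a-1)+1 by ring, Real.rpow_add_one h0.ne']
      have e2 : (1-x) ^ (b+1-1) = (1-x) ^ (b-1) * (1-x) := by
        rw [show b+1-1 = (b-1)+1 by ring,
          Real.rpow_add_one (by intro hc; nlinarith [hc] : (1:ℝ)-x ≠ 0)]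
      rw [e1, e2, pow_succ]
      ring
    rw [hsplit]
    have h1 := ih a (b+1) ha (by linarith)
    have h2 := ih (a+1) b (by linarith) hb
    rw [Bi_right a b ha hb] at h1
    rw [Bi_left a b ha hb] at h2
    set c := a + b with hc
    clear_value c
    set E1 : ℝ := exp (t * n * a / (a+(b+1)) + t^2 * n * (a+(b+1)+n) / (8*(a+(b+1)))) with hE1
    set E2 : ℝ := exp (t * n * (a+1) / (a+1+b) + t^2 * n * (a+1+b+n) / (8*(a+1+b))) with hE2
    clear_value E1 E2
    have hBpos := Bi_pos a b ha hb
    have step1 : (∫ x in Ioo (0:ℝ) 1, (1 - x + x * exp t)^n * (x ^ (a-1) * (1-x) ^ (b+1-1)))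
          + exp t * ∫ x in Ioo (0:ℝ) 1, (1 - x + x * exp t)^n * (x ^ (a+1-1) * (1-x) ^ (b-1))
        ≤ E1 * (b / c * Bi a b) + exp t * (E2 * (a / c * Bi a b)) := by
      refine add_le_add h1 (mul_le_mul_of_nonneg_left h2 (exp_pos t).le)
    refine step1.trans ?_
    -- scalar inequality
    set u : ℝ := t * (c+1+n) / (c+1) with hu
    clear_value u
    have hcu : a + (b+1) = c + 1 := by rw [hc]; ring
    have hcu2 : a + 1 + b = c + 1 := by rw [hc]; ring
    have harg : t + (t * n * (a+1) / (a+1+b) + t^2 * n * (a+1+b+n) / (8*(a+1+b)))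
        = (t * n * a / (a+(b+1)) + t^2 * n * (a+(b+1)+n) / (8*(a+(b+1)))) + u := by
      rw [hcu, hcu2, hu]
      field_simp [hab1.ne']
      ring
    have hexp2 : exp t * E2 = E1 * exp u := by
      rw [hE1, hE2, ← exp_add, ← exp_add, harg]
    have hE1pos : 0 < E1 := hE1 ▸ exp_pos _
    have hbc : b / c = 1 - a/c := by rw [hc]; field_simp; ring
    have hbern : 1 - a/c + (a/c) * exp u ≤ exp ((a/c) * u + u^2/8) :=
      bern_mgf (a/c) (by positivity) ((div_le_one hab).2 (by linarith)) u
    have hfin : E1 * ((a/c) * u + u^2/8).exp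
        ≤ exp (t * (n+1) * a / c + t^2 * (n+1) * (c+(n+1)) / (8*c)) := by
      rw [hE1, ← exp_add, exp_le_exp, hcu]
      have hlin : t * n * a / (c+1) + (a/c) * u = t * (n+1) * a / c := by
        rw [hu]; field_simp [hab.ne', hab1.ne']; ring
      have hquad : t^2 * n * (c+1+n) / (8*(c+1)) + u^2/8
          ≤ t^2 * (n+1) * (c+(n+1)) / (8*c) := by
        have hu2 : u^2/8 = t^2 * ((c+1+n)^2 / (8*(c+1)^2)) := by
          rw [hu]; field_simp
        have hA : t^2 * n * (c+1+n) / (8*(c+1)) = t^2 * (n * (c+1+n) / (8*(c+1))) := by ring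
        have hB : t^2 * (n+1) * (c+(n+1)) / (8*c) = t^2 * ((n+1) * (c+(n+1)) / (8*c)) := by ring
        rw [hu2, hA, hB, ← mul_add]
        refine mul_le_mul_of_nonneg_left ?_ (sq_nonneg t)
        have hkey : (n+1) * (c+(n+1)) / (8*c) - (n * (c+1+n) / (8*(c+1)) + (c+1+n)^2 / (8*(c+1)^2))
            = (c+n+1)^2 / (8*c*(c+1)^2) := by
          field_simp
          ring
        have hpos : (0:ℝ) ≤ ((c:ℝ)+n+1)^2 / (8*c*(c+1)^2) := by positivity
        linarith [hkey, hpos]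
      linarith [hlin, hquad]
    calc E1 * (b / c * Bi a b) + exp t * (E2 * (a / c * Bi a b))
        = (E1 * (1 - a/c + (a/c) * exp u)) * Bi a b := by
          rw [show rexp t * (E2 * (a / c * Bi a b)) = (rexp t * E2) * (a / c * Bi a b) by ring,
            hexp2, hbc]
          ring
      _ ≤ (E1 * exp ((a/c) * u + u^2/8)) * Bi a b := by
          refine mul_le_mul_of_nonneg_right (mul_le_mul_of_nonneg_left hbern hE1pos.le)
            hBpos.le
      _ ≤ exp (t * (n+1) * a / c + t^2 * (n+1) * (c+(n+1)) / (8*c)) * Bi a b := by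
          exact mul_le_mul_of_nonneg_right hfin hBpos.le
      _ = exp (t * ↑(n+1) * a / c + t^2 * ↑(n+1) * (c+↑(n+1)) / (8*c)) * Bi a b := by
          push_cast
          ring_nf

theorem stmt_5 (a b : ℝ) (ha : 0 < a) (hb : 0 < b) (n : ℕ) :
    ∀ lam : ℝ,
      ∫ R, Real.exp (lam * ((a + ∑ s, R s) / (a + b + n) - a / (a + b)))
          ∂(betaBernoulli a b n)
        ≤ Real.exp (lam ^ 2 * n / (8 * (a + b) * (a + b + n))) := by
  intro lam
  have hab : 0 < a + b := by linarith
  have habn : 0 < a + b + (n:ℝ) := by positivity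
  set t : ℝ := lam / (a + b + n) with ht
  set C0 : ℝ := lam * a / (a + b + n) - lam * a / (a + b) with hC0
  have hBpos := Bi_pos a b ha hb
  -- measurability of the integrand
  have hsum : Measurable fun R : Fin n → ℝ => ∑ s, R s :=
    Finset.measurable_sum _ fun i _ => measurable_pi_apply i
  have hmeas_f : Measurable fun R : Fin n → ℝ =>
      exp (lam * ((a + ∑ s, R s) / (a + b + n) - a / (a + b))) := by
    apply Measurable.exp
    exact (((measurable_const.add hsum).div_const _).sub measurable_const).const_mul lam
  -- pointwise product form
  have hpt : ∀ R : Fin n → ℝ,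
      exp (lam * ((a + ∑ s, R s) / (a + b + n) - a / (a + b)))
        = exp C0 * ∏ s : Fin n, exp (t * R s) := by
    intro R
    rw [← exp_sum, ← exp_add]
    congr 1
    rw [hC0, ht, ← Finset.mul_sum]
    ring
  -- pass to lintegral
  rw [integral_eq_lintegral_of_nonneg_ae
    (Filter.Eventually.of_forall fun R => (exp_pos _).le) hmeas_f.aestronglyMeasurable]
  refine ENNReal.toReal_le_of_le_ofReal (exp_pos _).le ?_
  -- the lintegral bound
  have hg : Measurable fun x : ℝ => ENNReal.ofReal (exp (t * x)) :=
    ENNReal.measurable_ofReal.comp ((measurable_id.const_mul t).exp)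
  have hof : Measurable fun R : Fin n → ℝ =>
      ENNReal.ofReal (exp (lam * ((a + ∑ s, R s) / (a + b + n) - a / (a + b)))) :=
    ENNReal.measurable_ofReal.comp hmeas_f
  rw [betaBernoulli, Measure.lintegral_bind (measurable_piBern n).aemeasurable hof.aemeasurable]
  -- inner integral
  have hinner : ∀ θ : ℝ,
      (∫⁻ R : Fin n → ℝ, ENNReal.ofReal
          (exp (lam * ((a + ∑ s, R s) / (a + b + n) - a / (a + b))))
        ∂(Measure.pi fun _ : Fin n => bernoulliMeasure θ))
      = ENNReal.ofReal (exp C0)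
          * (ENNReal.ofReal θ * ENNReal.ofReal (exp t) + ENNReal.ofReal (1 - θ)) ^ n := by
    intro θ
    have : ∀ R : Fin n → ℝ,
        ENNReal.ofReal (exp (lam * ((a + ∑ s, R s) / (a + b + n) - a / (a + b))))
          = ENNReal.ofReal (exp C0) * ∏ s : Fin n, ENNReal.ofReal (exp (t * R s)) := by
      intro R
      rw [hpt R, ENNReal.ofReal_mul (exp_pos _).le, ENNReal.ofReal_prod_of_nonneg]
      exact fun i _ => (exp_pos _).le
    simp_rw [this]
    have hprod : Measurable fun R : Fin n → ℝ => ∏ s : Fin n, ENNReal.ofReal (exp (t * R s)) :=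
      Finset.measurable_prod _ fun i _ => hg.comp (measurable_pi_apply i)
    rw [lintegral_const_mul _ hprod, lintegral_pi_pow (bernoulliMeasure θ) hg, lint_bern]
  simp_rw [hinner]
  -- outer integral over the beta measure
  have hdens : Measurable fun x : ℝ =>
      ENNReal.ofReal
        (Set.indicator (Set.Ioo (0:ℝ) 1)
          (fun y => y ^ (a - 1) * (1 - y) ^ (b - 1)
            / (∫ z in Set.Ioo (0:ℝ) 1, z ^ (a - 1) * (1 - z) ^ (b - 1))) x) := by
    refine ENNReal.measurable_ofReal.comp (Measurable.indicator ?_ measurableSet_Ioo)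
    fun_prop
  have hG : Measurable fun θ : ℝ => ENNReal.ofReal (exp C0)
      * (ENNReal.ofReal θ * ENNReal.ofReal (exp t) + ENNReal.ofReal (1 - θ)) ^ n := by
    refine Measurable.const_mul ?_ _
    exact ((ENNReal.measurable_ofReal.mul_const _).add
      (ENNReal.measurable_ofReal.comp (measurable_const.sub measurable_id))).pow_const n
  rw [betaMeasure, lintegral_withDensity_eq_lintegral_mul volume hdens hG]
  -- rewrite as an integral over Ioo
  have hind : (fun θ : ℝ =>
      (ENNReal.ofReal
        (Set.indicator (Set.Ioo (0:ℝ) 1)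
          (fun y => y ^ (a - 1) * (1 - y) ^ (b - 1)
            / (∫ z in Set.Ioo (0:ℝ) 1, z ^ (a - 1) * (1 - z) ^ (b - 1))) θ))
        * (ENNReal.ofReal (exp C0)
          * (ENNReal.ofReal θ * ENNReal.ofReal (exp t) + ENNReal.ofReal (1 - θ)) ^ n))
      = Set.indicator (Set.Ioo (0:ℝ) 1) (fun θ =>
          ENNReal.ofReal ((exp C0 / Bi a b)
            * ((1 - θ + θ * exp t) ^ n * (θ ^ (a-1) * (1-θ) ^ (b-1))))) := by
    funext θ
    by_cases hθ : θ ∈ Ioo (0:ℝ) 1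
    · rw [Set.indicator_of_mem hθ, Set.indicator_of_mem hθ]
      obtain ⟨h0, h1⟩ := hθ
      have hmix : ENNReal.ofReal θ * ENNReal.ofReal (exp t) + ENNReal.ofReal (1 - θ)
          = ENNReal.ofReal (1 - θ + θ * exp t) := by
        rw [← ENNReal.ofReal_mul h0.le, ← ENNReal.ofReal_add (by positivity) (by linarith)]
        congr 1; ring
      have hρB : 0 ≤ θ ^ (a-1) * (1-θ) ^ (b-1)
          / (∫ z in Set.Ioo (0:ℝ) 1, z ^ (a - 1) * (1 - z) ^ (b - 1)) :=
        div_nonneg (mul_nonneg (rpow_nonneg h0.le _) (rpow_nonneg (by linarith) _)) hBpos.le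
      rw [hmix, ← ENNReal.ofReal_pow (by nlinarith [exp_pos t]),
        ← ENNReal.ofReal_mul (exp_pos C0).le,
        ← ENNReal.ofReal_mul hρB]
      congr 1
      show θ ^ (a-1) * (1-θ) ^ (b-1) / Bi a b * (exp C0 * (1 - θ + θ*exp t)^n) = _
      field_simp
    · rw [Set.indicator_of_notMem hθ, Set.indicator_of_notMem hθ]
      simp
  simp only [Pi.mul_apply]
  rw [hind, lintegral_indicator measurableSet_Ioo]
  -- convert to a Bochner integral
  have hnn : 0 ≤ᵐ[volume.restrict (Ioo (0:ℝ) 1)] fun θ =>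
      (exp C0 / Bi a b) * ((1 - θ + θ * exp t) ^ n * (θ ^ (a-1) * (1-θ) ^ (b-1))) := by
    refine (ae_restrict_iff' measurableSet_Ioo).2 (Filter.Eventually.of_forall fun θ hθ => ?_)
    obtain ⟨h0, h1⟩ := hθ
    have h2 : (0:ℝ) ≤ 1 - θ + θ * exp t := by nlinarith [exp_pos t]
    have h3 : (0:ℝ) < 1 - θ := by linarith
    positivity
  have hint : IntegrableOn (fun θ =>
      (exp C0 / Bi a b) * ((1 - θ + θ * exp t) ^ n * (θ ^ (a-1) * (1-θ) ^ (b-1))))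
      (Ioo (0:ℝ) 1) volume := (intOnP t n a b ha hb).const_mul _
  rw [← ofReal_integral_eq_lintegral_ofReal hint hnn]
  refine ENNReal.ofReal_le_ofReal ?_
  rw [integral_const_mul]
  have hcore := core t n a b ha hb
  calc exp C0 / Bi a b
        * ∫ θ in Ioo (0:ℝ) 1, (1 - θ + θ * exp t) ^ n * (θ ^ (a-1) * (1-θ) ^ (b-1))
      ≤ exp C0 / Bi a b
          * (exp (t * n * a / (a+b) + t^2 * n * (a+b+n) / (8*(a+b))) * Bi a b) := by
        exact mul_le_mul_of_nonneg_left hcore (by positivity)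
    _ = exp C0 * exp (t * n * a / (a+b) + t^2 * n * (a+b+n) / (8*(a+b))) := by
        field_simp
    _ = exp (lam ^ 2 * n / (8 * (a + b) * (a + b + n))) := by
        rw [← exp_add]
        congr 1
        rw [hC0, ht]
        field_simp
        ring
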